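/- Let (A, ⟨·,·⟩) be a Frobenius algebra, n ∈ A nilpotent of order d (n^d = 0, n^{d-1} ≠ 0), J_k = {x : x∘n^k = 0}, I = (n), I_{-1} = 0, I_0 = I, and I_k = I + J_k for 1 ≤ k ≤ d. Then for each k with 1 ≤ k ≤ d, the pairing on I_k/I_{k-1} induced by (x,y)_k := ⟨x̃, ỹ ∘ n^{k-1}⟩ (for representatives x̃, ỹ ∈ J_k) is well-defined, symmetric, nondegenerate, and satisfies (a∘x, y)_k = (x, a∘y)_k for all a ∈ A/I_{k-1}. -/

import Mathlib

open LinearMap.BilinForm in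
/-- Key lemma: if `B x y = 0` for all `y` with `y * m = 0`, then `x ∈ A·m`. -/
lemma aux_perp {A : Type*} [CommRing A] [Algebra ℂ A] [FiniteDimensional ℂ A]
    (B : A →ₗ[ℂ] A →ₗ[ℂ] ℂ)
    (hsymm : ∀ x y : A, B x y = B y x)
    (hnondeg : ∀ x : A, (∀ y : A, B x y = 0) → x = 0)
    (hfrob : ∀ x y z : A, B (x * y) z = B x (y * z))
    (m x : A) (hx : ∀ y : A, y * m = 0 → B x y = 0) :
    ∃ z : A, z * m = x := by
  have hrefl : LinearMap.BilinForm.IsRefl B := fun u v h => by rw [hsymm]; exact h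
  have hnd : LinearMap.BilinForm.Nondegenerate B :=
    ⟨fun u h => hnondeg u h, fun u h => hnondeg u (fun y => by rw [hsymm]; exact h y)⟩
  have hswap : ∀ u v : A, B u (v * m) = B (u * m) v := by
    intro u v
    rw [hsymm u (v * m), hfrob, mul_comm m u, hsymm v (u * m)]
  set W : Submodule ℂ A := LinearMap.range (LinearMap.mulRight ℂ m) with hW
  have hWperp : LinearMap.BilinForm.orthogonal B W =
      LinearMap.ker (LinearMap.mulRight ℂ m) := by
    ext y
    rw [LinearMap.BilinForm.mem_orthogonal_iff]
    constructor
    · intro hy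
      have h0 : ∀ z : A, B (y * m) z = 0 := by
        intro z
        have := hy (z * m) ⟨z, rfl⟩
        rw [hsymm] at this
        rw [← hswap]; exact this
      simpa [LinearMap.mem_ker, LinearMap.mulRight_apply] using hnondeg _ h0
    · intro hy u hu
      obtain ⟨z, rfl⟩ := hu
      simp only [LinearMap.mulRight_apply] at hy ⊢
      rw [hsymm, hswap]
      simp [LinearMap.mem_ker, LinearMap.mulRight_apply] at hy
      rw [hy]
      simp
  have hxW : x ∈ W := by
    rw [← orthogonal_orthogonal hnd hrefl W, hWperp,
      LinearMap.BilinForm.mem_orthogonal_iff]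
    intro y hy
    simp only [LinearMap.mem_ker, LinearMap.mulRight_apply] at hy
    exact hrefl _ _ (hx y hy)
  obtain ⟨z, hz⟩ := hxW
  exact ⟨z, hz⟩

/-- nilpotent construction.  For a Frobenius algebra `(A, B)` and a
nilpotent `n` of order `d`, with `J_j = Ker (· * n^j)`, `I_j = (n) + J_j`
(so that `I_{k-1}` is uniformly `(n) ⊔ J_{k-1}`, with `J_0 = 0`), the pairing
`(x,y)_k := B x̃ (ỹ * n^(k-1))` on `I_k/I_{k-1}` (via representatives in `J_k`)
is well-defined, symmetric, nondegenerate, and satisfies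
`(a∘x, y)_k = (x, a∘y)_k`. -/
theorem stmt2 {A : Type*} [CommRing A] [Algebra ℂ A] [FiniteDimensional ℂ A]
    (B : A →ₗ[ℂ] A →ₗ[ℂ] ℂ)
    (hsymm : ∀ x y : A, B x y = B y x)
    (hnondeg : ∀ x : A, (∀ y : A, B x y = 0) → x = 0)
    (hfrob : ∀ x y z : A, B (x * y) z = B x (y * z))
    (n : A) (d : ℕ) (hd : 1 ≤ d) (hnd : n ^ d = 0) (hne : n ^ (d - 1) ≠ 0)
    (k : ℕ) (hk1 : 1 ≤ k) (hkd : k ≤ d) :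
    let J : ℕ → Submodule ℂ A := fun j => LinearMap.ker (LinearMap.mulRight ℂ (n ^ j))
    let I : ℕ → Submodule ℂ A := fun j => LinearMap.range (LinearMap.mulRight ℂ n) ⊔ J j
    -- every element of I_k has a representative in J_k modulo I_{k-1}
    (∀ x ∈ I k, ∃ x' ∈ J k, x - x' ∈ I (k - 1)) ∧
    -- well-definedness
    (∀ x y x' y' : A, x ∈ J k → y ∈ J k → x' ∈ J k → y' ∈ J k →
      x - x' ∈ I (k - 1) → y - y' ∈ I (k - 1) →
      B x (y * n ^ (k - 1)) = B x' (y' * n ^ (k - 1))) ∧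
    -- symmetry
    (∀ x y : A, x ∈ J k → y ∈ J k →
      B x (y * n ^ (k - 1)) = B y (x * n ^ (k - 1))) ∧
    -- nondegeneracy on the graded quotient
    (∀ x ∈ J k, (∀ y ∈ J k, B x (y * n ^ (k - 1)) = 0) → x ∈ I (k - 1)) ∧
    -- compatibility with the A/I_{k-1}-module structure (Frobenius property)
    (∀ a x y : A, x ∈ J k → y ∈ J k →
      B (a * x) (y * n ^ (k - 1)) = B x ((a * y) * n ^ (k - 1))) := by
  intro J I
  have hJ : ∀ j (x : A), x ∈ J j ↔ x * n ^ j = 0 := by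
    intro j x; simp [J, LinearMap.mem_ker]
  have hpow : n ^ (k - 1) * n = n ^ k := by
    rw [← pow_succ]; congr 1; omega
  -- B x (z * n^k) = 0 whenever x ∈ J k
  have hkill : ∀ x z : A, x ∈ J k → B x (z * n ^ k) = 0 := by
    intro x z hx
    rw [hsymm, hfrob, mul_comm (n ^ k) x, (hJ k x).mp hx]
    simp
  have hkill2 : ∀ y z : A, y ∈ J k → B z (y * n ^ k) = 0 := by
    intro y z hy
    rw [hsymm, hfrob, mul_comm (n ^ k) z]
    exact hkill y z hy
  -- B u (y * n^(k-1)) = 0 whenever u ∈ I (k-1) and y ∈ J k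
  have hIkill : ∀ u y : A, u ∈ I (k - 1) → y ∈ J k → B u (y * n ^ (k - 1)) = 0 := by
    intro u y hu hy
    obtain ⟨a, ha, j, hj, rfl⟩ := Submodule.mem_sup.mp hu
    obtain ⟨z, rfl⟩ := ha
    simp only [LinearMap.mulRight_apply]
    rw [map_add, LinearMap.add_apply]
    have h1 : B (z * n) (y * n ^ (k - 1)) = 0 := by
      rw [hfrob]
      have : n * (y * n ^ (k - 1)) = y * n ^ k := by rw [← hpow]; ring
      rw [this, hkill2 y z hy]
    have h2 : B j (y * n ^ (k - 1)) = 0 := by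
      rw [hsymm, hfrob, mul_comm (n ^ (k - 1)) j, (hJ (k - 1) j).mp hj]
      simp
    rw [h1, h2, add_zero]
  -- symmetry of the pairing
  have hsym' : ∀ x y : A, B x (y * n ^ (k - 1)) = B y (x * n ^ (k - 1)) := by
    intro x y
    rw [← hfrob, mul_comm x y, hfrob]
  refine ⟨?_, ?_, fun x y _ _ => hsym' x y, ?_, ?_⟩
  · -- representatives
    intro x hx
    obtain ⟨a, ha, j, hj, rfl⟩ := Submodule.mem_sup.mp hx
    refine ⟨j, hj, ?_⟩
    simp only [add_sub_cancel_right]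
    exact Submodule.mem_sup_left ha
  · -- well-definedness
    intro x y x' y' hx hy hx' hy' hxx hyy
    have e1 : B x (y * n ^ (k - 1)) - B x' (y * n ^ (k - 1)) = 0 := by
      rw [← LinearMap.sub_apply, ← map_sub, hIkill _ y hxx hy]
    have e2 : B x' (y * n ^ (k - 1)) - B x' (y' * n ^ (k - 1)) = 0 := by
      rw [hsym' x' y, hsym' x' y', ← LinearMap.sub_apply, ← map_sub,
        hIkill _ x' hyy hx']
    linear_combination e1 + e2
  · -- nondegeneracy
    intro x hx hxy
    -- B (x * n^(k-1)) y = 0 for all y ∈ J k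
    have h0 : ∀ y : A, y * n ^ k = 0 → B (x * n ^ (k - 1)) y = 0 := by
      intro y hy
      have hyJ : y ∈ J k := (hJ k y).mpr hy
      have := hxy y hyJ
      rw [hsym', hsymm] at this
      exact this
    obtain ⟨z, hz⟩ := aux_perp B hsymm hnondeg hfrob (n ^ k) (x * n ^ (k - 1)) h0
    -- x - z * n ∈ J (k-1), so x = (z*n) + (x - z*n) ∈ I (k-1)
    have hmem : x - z * n ∈ J (k - 1) := by
      rw [hJ]
      have : (x - z * n) * n ^ (k - 1) = x * n ^ (k - 1) - z * n ^ k := by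
        rw [← hpow]; ring
      rw [this, ← hz]; ring
    have : x = z * n + (x - z * n) := by ring
    rw [this]
    exact Submodule.add_mem_sup ⟨z, rfl⟩ hmem
  · -- Frobenius compatibility
    intro a x y _ _
    rw [mul_comm a x, hfrob, mul_assoc]
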